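/- Let X : Fin 5 → Fin 5 → Fin 5 → Fin 5 be a layer-latin cube of order 5 (each X l is a latin square of order 5). Let A, R, C be 2-element subsets of Fin 5, with complements Aᶜ, Rᶜ, Cᶜ (which are 3-element subsets). If the number of distinct ranges of transversals of the subarray of X with layers in A, rows in R and columns in C, plus the number of distinct ranges of transversals of the subarray of X with layers in Aᶜ, rows in Rᶜ and columns in Cᶜ, is at least 11, then X has a transversal. -/
import Mathlib


/-- The set of ranges of transversals of the subarray of a layer-latin cube `X` of
order 5 with layers in `A`, rows in `R` and columns in `C` (all of cardinality `m`). -/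
def transversalRanges (X : Fin 5 → Fin 5 → Fin 5 → Fin 5) (m : ℕ)
    (A R C : Finset (Fin 5)) : Set (Finset (Fin 5)) :=
  { S | ∃ l r c : Fin m → Fin 5,
      Function.Injective l ∧ Function.Injective r ∧ Function.Injective c ∧
      Finset.image l Finset.univ = A ∧
      Finset.image r Finset.univ = R ∧
      Finset.image c Finset.univ = C ∧
      Function.Injective (fun t => X (l t) (r t) (c t)) ∧
      S = Finset.image (fun t => X (l t) (r t) (c t)) Finset.univ }

lemma sum_elim_bij (f : Fin 2 → Fin 5) (g : Fin 3 → Fin 5)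
    (hf : Function.Injective f) (hg : Function.Injective g) (P : Finset (Fin 5))
    (h1 : Finset.image f Finset.univ = P) (h2 : Finset.image g Finset.univ = Pᶜ) :
    Function.Bijective (Sum.elim f g) := by
  have key : ∀ a b, f a ≠ g b := by
    intro a b hab
    have h3 : f a ∈ P := h1 ▸ Finset.mem_image_of_mem f (Finset.mem_univ a)
    have h4 : g b ∈ Pᶜ := h2 ▸ Finset.mem_image_of_mem g (Finset.mem_univ b)
    rw [hab] at h3
    exact Finset.mem_compl.mp h4 h3
  rw [Fintype.bijective_iff_injective_and_card]
  refine ⟨?_, by simp⟩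
  intro a b hab
  match a, b with
  | .inl a, .inl b => exact congrArg _ (hf hab)
  | .inr a, .inr b => exact congrArg _ (hg hab)
  | .inl a, .inr b => exact absurd hab (key a b)
  | .inr a, .inl b => exact absurd hab.symm (key b a)

/-- If the number of ranges of transversals of a `2×2×2` subcube plus the number of
ranges of transversals of the complementary `3×3×3` subcube is at least 11, then the
layer-latin cube of order 5 has a transversal. -/
theorem layer_latin_cube_transversal_of_ranges_sum_ge_eleven
    (X : Fin 5 → Fin 5 → Fin 5 → Fin 5)
    (hX1 : ∀ (l : Fin 5) (c : Fin 5), Function.Bijective fun r => X l r c)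
    (hX2 : ∀ (l : Fin 5) (r : Fin 5), Function.Bijective fun c => X l r c)
    (A R C : Finset (Fin 5)) (hA : A.card = 2) (hR : R.card = 2) (hC : C.card = 2)
    (h : 11 ≤ (transversalRanges X 2 A R C).ncard +
      (transversalRanges X 3 Aᶜ Rᶜ Cᶜ).ncard) :
    ∃ u : Fin 5 → Fin 5 × Fin 5,
      (Function.Bijective fun l => (u l).1) ∧
      (Function.Bijective fun l => (u l).2) ∧
      Function.Bijective fun l => X l (u l).1 (u l).2 := by
  classical
  set s := transversalRanges X 2 A R C with hs
  set t := (fun S : Finset (Fin 5) => Sᶜ) '' transversalRanges X 3 Aᶜ Rᶜ Cᶜ with ht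
  -- every element of s and t is a 2-element set
  have hs2 : ∀ S ∈ s, S.card = 2 := by
    rintro S ⟨l, r, c, hl, hr, hc, _, _, _, hinj, hSeq⟩
    rw [hSeq, Finset.card_image_of_injective _ hinj]
    simp
  have ht2 : ∀ S ∈ t, S.card = 2 := by
    rintro S ⟨T, ⟨l, r, c, hl, hr, hc, _, _, _, hinj, hTeq⟩, hST⟩
    have : T.card = 3 := by
      rw [hTeq, Finset.card_image_of_injective _ hinj]; simp
    rw [← hST, Finset.card_compl, this]
    simp
  have hU : ({S : Finset (Fin 5) | S.card = 2}).ncard = 10 := by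
    rw [Set.ncard_eq_toFinset_card']
    decide
  have hfins : s.Finite := Set.toFinite _
  have hfint : t.Finite := Set.toFinite _
  have hsub : s ∪ t ⊆ {S : Finset (Fin 5) | S.card = 2} := by
    rintro S (hS | hS)
    · exact hs2 S hS
    · exact ht2 S hS
  have hunion : (s ∪ t).ncard ≤ 10 := hU ▸ Set.ncard_le_ncard hsub (Set.toFinite _)
  have hteq : t.ncard = (transversalRanges X 3 Aᶜ Rᶜ Cᶜ).ncard :=
    Set.ncard_image_of_injective _ (fun a b hab => by simpa using congrArg compl hab)
  have hsum : 11 ≤ s.ncard + t.ncard := by rw [hteq]; exact h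
  have hkey := Set.ncard_union_add_ncard_inter s t hfins hfint
  have hinter : 1 ≤ (s ∩ t).ncard := by omega
  obtain ⟨S, hSs, hSt⟩ := Set.nonempty_of_ncard_ne_zero (by omega) (s := s ∩ t)
  obtain ⟨l, r, c, hl, hr, hc, hlA, hrR, hcC, hv, hSeq⟩ := hSs
  obtain ⟨T, ⟨l', r', c', hl', hr', hc', hlA', hrR', hcC', hv', hTeq⟩, hST⟩ := hSt
  have hTc : Finset.image (fun t => X (l' t) (r' t) (c' t)) Finset.univ = Sᶜ := by
    rw [← hTeq, ← hST, compl_compl]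
  -- build the equiv on layers
  have hlbij := sum_elim_bij l l' hl hl' A hlA hlA'
  have hrbij := sum_elim_bij r r' hr hr' R hrR hrR'
  have hcbij := sum_elim_bij c c' hc hc' C hcC hcC'
  have hvbij := sum_elim_bij (fun t => X (l t) (r t) (c t))
      (fun t => X (l' t) (r' t) (c' t)) hv hv' S hSeq.symm hTc
  let e : Fin 2 ⊕ Fin 3 ≃ Fin 5 := Equiv.ofBijective _ hlbij
  refine ⟨fun x => Sum.elim (fun t => (r t, c t)) (fun t => (r' t, c' t)) (e.symm x),
    ?_, ?_, ?_⟩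
  · have : (fun x : Fin 5 => (Sum.elim (fun t => (r t, c t))
        (fun t => (r' t, c' t)) (e.symm x)).1) = (Sum.elim r r') ∘ e.symm := by
      funext x; rcases h' : e.symm x with a | a <;> simp [h']
    rw [this]
    exact hrbij.comp e.symm.bijective
  · have : (fun x : Fin 5 => (Sum.elim (fun t => (r t, c t))
        (fun t => (r' t, c' t)) (e.symm x)).2) = (Sum.elim c c') ∘ e.symm := by
      funext x; rcases h' : e.symm x with a | a <;> simp [h']
    rw [this]
    exact hcbij.comp e.symm.bijective
  · have : (fun x : Fin 5 => X x
        (Sum.elim (fun t => (r t, c t)) (fun t => (r' t, c' t)) (e.symm x)).1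
        (Sum.elim (fun t => (r t, c t)) (fun t => (r' t, c' t)) (e.symm x)).2)
        = (Sum.elim (fun t => X (l t) (r t) (c t))
            (fun t => X (l' t) (r' t) (c' t))) ∘ e.symm := by
      funext x
      have hx : x = Sum.elim l l' (e.symm x) := (e.apply_symm_apply x).symm
      rcases h' : e.symm x with a | a <;> rw [h'] at hx <;>
        simp only [Function.comp_apply, h', Sum.elim_inl, Sum.elim_inr] at hx ⊢ <;>
        rw [hx]
    rw [this]
    exact hvbij.comp e.symm.bijective
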